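/- Let m ≥ 3 and let A ∈ 𝐔_m be an F_m-matrix (A has entries in {0, 1/2, 1}, the full index set is saturated, and no proper nonempty subset is saturated). Then A is not an extreme point of 𝐔_m. -/

import Mathlib

open Matrix Finset

def IsInU {m : ℕ} (A : Matrix (Fin m) (Fin m) ℝ) : Prop :=
  A.IsSymm ∧ (∀ i j, 0 ≤ A i j) ∧
    ∀ α : Finset (Fin m), ∑ i ∈ α, ∑ j ∈ α, A i j ≤ (α.card : ℝ)

def IsInUtop {m : ℕ} (A : Matrix (Fin m) (Fin m) ℝ) : Prop :=
  IsInU A ∧ ∑ i, ∑ j, A i j = (m : ℝ)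

def IsExtremeIn {m : ℕ} (S : Matrix (Fin m) (Fin m) ℝ → Prop)
    (A : Matrix (Fin m) (Fin m) ℝ) : Prop :=
  S A ∧ ∀ A₁ A₂, S A₁ → S A₂ → A₁ + A₂ = (2 : ℝ) • A → A₁ = A ∧ A₂ = A

def IsRowStochastic {m : ℕ} (X : Matrix (Fin m) (Fin m) ℝ) : Prop :=
  (∀ i j, 0 ≤ X i j) ∧ ∀ i, ∑ j, X i j = 1

def IsSubstochastic {m : ℕ} (X : Matrix (Fin m) (Fin m) ℝ) : Prop :=
  (∀ i j, 0 ≤ X i j) ∧ ∀ i, ∑ j, X i j ≤ 1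

/-! Auxiliary definitions for the proof. -/

/-- The symmetric "elementary" matrix with ones at position `r` and `r.swap`. -/
def gmat {m : ℕ} (r : Fin m × Fin m) : Matrix (Fin m) (Fin m) ℝ :=
  Matrix.of fun x y => if (x, y) = r ∨ (x, y) = r.swap then 1 else 0

/-- The total sum of `gmat r`: 1 for a diagonal position, 2 otherwise. -/
def eW {m : ℕ} (r : Fin m × Fin m) : ℝ := if r.1 = r.2 then 1 else 2

lemma eW_pos {m : ℕ} (r : Fin m × Fin m) : 0 < eW r := by
  unfold eW; split_ifs <;> norm_num

lemma eW_le_two {m : ℕ} (r : Fin m × Fin m) : eW r ≤ 2 := by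
  unfold eW; split_ifs <;> norm_num

lemma gmat_nonneg {m : ℕ} (r : Fin m × Fin m) (x y : Fin m) : 0 ≤ gmat r x y := by
  unfold gmat; simp only [Matrix.of_apply]; split_ifs <;> norm_num

lemma gmat_symm {m : ℕ} (r : Fin m × Fin m) (x y : Fin m) :
    gmat r y x = gmat r x y := by
  obtain ⟨a, b⟩ := r
  unfold gmat
  simp only [Matrix.of_apply, Prod.swap_prod_mk, Prod.mk.injEq]
  by_cases h1 : x = a <;> by_cases h2 : y = b <;> by_cases h3 : x = b <;>
    by_cases h4 : y = a <;> simp [h1, h2, h3, h4] <;> tauto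

lemma gmat_self {m : ℕ} (r : Fin m × Fin m) : gmat r r.1 r.2 = 1 := by
  unfold gmat; simp

lemma gmat_eq_zero {m : ℕ} {r : Fin m × Fin m} {x y : Fin m}
    (h1 : (x, y) ≠ r) (h2 : (x, y) ≠ r.swap) : gmat r x y = 0 := by
  unfold gmat
  simp only [Matrix.of_apply]
  rw [if_neg]
  tauto

lemma gmat_sum {m : ℕ} (r : Fin m × Fin m) :
    ∑ x, ∑ y, gmat r x y = eW r := by
  classical
  rw [show (∑ x, ∑ y, gmat r x y) = ∑ z : Fin m × Fin m, gmat r z.1 z.2 from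
    (Fintype.sum_prod_type' (f := fun x y => gmat r x y)).symm]
  have hre : ∀ z : Fin m × Fin m, gmat r z.1 z.2 = if z = r ∨ z = r.swap then (1:ℝ) else 0 := by
    intro z; unfold gmat; simp
  rw [Finset.sum_congr rfl fun z _ => hre z]
  by_cases hd : r.1 = r.2
  · have hs : r.swap = r := by
      obtain ⟨a, b⟩ := r
      simp only at hd
      subst hd; rfl
    simp only [hs, or_self]
    rw [Finset.sum_ite_eq' Finset.univ r (fun _ => (1:ℝ))]
    simp [eW, hd]
  · have hs : r.swap ≠ r := by
      intro h
      obtain ⟨a, b⟩ := r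
      simp only [Prod.swap_prod_mk, Prod.mk.injEq] at h
      exact hd (h.2 ▸ rfl)
    have key : ∀ z : Fin m × Fin m,
        (if z = r ∨ z = r.swap then (1:ℝ) else 0)
          = (if z = r then (1:ℝ) else 0) + (if z = r.swap then (1:ℝ) else 0) := by
      intro z
      by_cases h1 : z = r <;> by_cases h2 : z = r.swap
      · exact absurd (h1 ▸ h2 : r = r.swap) (Ne.symm hs)
      · simp [h1, h2, Ne.symm hs]
      · simp [h1, h2, hs]
      · simp [h1, h2]
    rw [Finset.sum_congr rfl fun z _ => key z, Finset.sum_add_distrib]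
    rw [Finset.sum_ite_eq' Finset.univ r (fun _ => (1:ℝ)),
      Finset.sum_ite_eq' Finset.univ r.swap (fun _ => (1:ℝ))]
    simp [eW, hd]
    norm_num

lemma gmat_sum_le {m : ℕ} (r : Fin m × Fin m) (α : Finset (Fin m)) :
    ∑ i ∈ α, ∑ j ∈ α, gmat r i j ≤ eW r := by
  calc ∑ i ∈ α, ∑ j ∈ α, gmat r i j
      ≤ ∑ i ∈ α, ∑ j, gmat r i j := by
        refine Finset.sum_le_sum fun i _ => ?_
        exact Finset.sum_le_sum_of_subset_of_nonneg (Finset.subset_univ α)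
          (fun j _ _ => gmat_nonneg r i j)
    _ ≤ ∑ i, ∑ j, gmat r i j :=
        Finset.sum_le_sum_of_subset_of_nonneg (Finset.subset_univ α)
          (fun i _ _ => Finset.sum_nonneg fun j _ => gmat_nonneg r i j)
    _ = eW r := gmat_sum r

theorem stmt_13 {m : ℕ} (hm : 3 ≤ m) (A : Matrix (Fin m) (Fin m) ℝ)
    (hA : IsInU A)
    (hval : ∀ i j, A i j = 0 ∨ A i j = 1/2 ∨ A i j = 1)
    (hsat : ∑ i, ∑ j, A i j = (m : ℝ))
    (hnosat : ∀ α : Finset (Fin m), α.Nonempty → α ≠ Finset.univ →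
      ∑ i ∈ α, ∑ j ∈ α, A i j ≠ (α.card : ℝ)) :
    ¬ IsExtremeIn IsInU A := by
  classical
  obtain ⟨hsymm, hnn, hineq⟩ := hA
  rintro ⟨-, hext⟩
  -- entries are at most 1
  have hle1 : ∀ i j, A i j ≤ 1 := by
    intro i j; rcases hval i j with h | h | h <;> rw [h] <;> norm_num
  -- the positive support has at least 3 elements
  set T : Finset (Fin m × Fin m) :=
    (Finset.univ ×ˢ Finset.univ).filter (fun z => 0 < A z.1 z.2) with hTdef
  have hsumT : ∑ z ∈ T, A z.1 z.2 = (m : ℝ) := by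
    rw [hTdef, Finset.sum_filter_of_ne (fun z _ hz => lt_of_le_of_ne (hnn z.1 z.2) (Ne.symm hz))]
    exact (Finset.sum_product' (f := fun x y => A x y) _ _).trans hsat
  have hTcard : 3 ≤ T.card := by
    have h1 : (m : ℝ) ≤ (T.card : ℝ) := by
      rw [← hsumT]
      calc ∑ z ∈ T, A z.1 z.2 ≤ ∑ _z ∈ T, (1 : ℝ) :=
            Finset.sum_le_sum fun z _ => hle1 z.1 z.2
        _ = (T.card : ℝ) := by simp
    have : m ≤ T.card := by exact_mod_cast h1
    omega
  -- pick two distinct symmetric positions with positive entries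
  obtain ⟨p, hpT⟩ := Finset.card_pos.mp (by omega : 0 < T.card)
  have hsdiff : 0 < (T \ {p, p.swap}).card := by
    have h1 := Finset.le_card_sdiff ({p, p.swap} : Finset (Fin m × Fin m)) T
    have h2 : ({p, p.swap} : Finset (Fin m × Fin m)).card ≤ 2 := by
      apply le_trans (Finset.card_insert_le _ _); simp
    omega
  obtain ⟨q, hq⟩ := Finset.card_pos.mp hsdiff
  rw [Finset.mem_sdiff] at hq
  obtain ⟨hqT, hqns⟩ := hq
  have hqp : q ≠ p := fun h => hqns (by simp [h])
  have hqps : q ≠ p.swap := fun h => hqns (by simp [h])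
  have hpq : p ≠ q := Ne.symm hqp
  have hpqs : p ≠ q.swap := by
    intro h
    exact hqps (by rw [h, Prod.swap_swap])
  have hAp : 0 < A p.1 p.2 := (Finset.mem_filter.mp hpT).2
  have hAq : 0 < A q.1 q.2 := (Finset.mem_filter.mp hqT).2
  -- the family of proper nonempty subsets and its slack
  set F : Finset (Finset (Fin m)) :=
    Finset.univ.filter (fun α => α.Nonempty ∧ α ≠ Finset.univ) with hFdef
  have hFne : F.Nonempty := by
    refine ⟨{⟨0, by omega⟩}, ?_⟩
    rw [hFdef, Finset.mem_filter]
    refine ⟨Finset.mem_univ _, Finset.singleton_nonempty _, fun h => ?_⟩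
    have := congrArg Finset.card h
    simp [Finset.card_univ] at this
    omega
  set δ : ℝ := F.inf' hFne (fun α => (α.card : ℝ) - ∑ i ∈ α, ∑ j ∈ α, A i j) with hδdef
  have hδpos : 0 < δ := by
    rw [hδdef, Finset.lt_inf'_iff]
    intro α hα
    rw [hFdef, Finset.mem_filter] at hα
    have hlt := lt_of_le_of_ne (hineq α) (hnosat α hα.2.1 hα.2.2)
    linarith
  have hδle : ∀ α : Finset (Fin m), α.Nonempty → α ≠ Finset.univ →
      δ ≤ (α.card : ℝ) - ∑ i ∈ α, ∑ j ∈ α, A i j := by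
    intro α h1 h2
    exact Finset.inf'_le _ (by rw [hFdef, Finset.mem_filter]; exact ⟨Finset.mem_univ _, h1, h2⟩)
  -- the perturbation size
  set ε : ℝ := min (min (δ / 4) (A p.1 p.2 / 2)) (A q.1 q.2 / 2) with hεdef
  have hεpos : 0 < ε := by
    rw [hεdef]
    simp only [lt_min_iff]
    refine ⟨⟨by linarith, by linarith⟩, by linarith⟩
  have hεδ : ε ≤ δ / 4 := le_trans (min_le_left _ _) (min_le_left _ _)
  have hεp : ε ≤ A p.1 p.2 / 2 := le_trans (min_le_left _ _) (min_le_right _ _)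
  have hεq : ε ≤ A q.1 q.2 / 2 := min_le_right _ _
  -- key lemma : the perturbed matrices lie in U
  have key : ∀ r s : Fin m × Fin m, 0 < A s.1 s.2 → s ≠ r → s ≠ r.swap →
      ε * 2 ≤ A s.1 s.2 →
      IsInU (A + ε • (eW s • gmat r - eW r • gmat s)) := by
    intro r s hAs hsr hsrs hε2
    have hsr' : r ≠ s := Ne.symm hsr
    have hsrs' : r ≠ s.swap := by
      intro h; exact hsrs (by rw [h, Prod.swap_swap])
    -- the set {r, r.swap} and {s, s.swap} are disjoint
    have hdisj : ∀ x y : Fin m, ((x, y) = s ∨ (x, y) = s.swap) →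
        gmat r x y = 0 := by
      rintro x y (h | h)
      · exact gmat_eq_zero (h ▸ hsr) (h ▸ hsrs)
      · refine gmat_eq_zero (fun hc => hsrs' (hc.symm.trans h)) (fun hc => ?_)
        have h2 : r.swap = s.swap := hc.symm.trans h
        have h3 := congrArg Prod.swap h2
        rw [Prod.swap_swap, Prod.swap_swap] at h3
        exact hsr' h3
    refine ⟨?_, ?_, ?_⟩
    · -- symmetry
      apply Matrix.IsSymm.ext
      intro x y
      simp only [Matrix.add_apply, Matrix.smul_apply, Matrix.sub_apply, smul_eq_mul]
      rw [hsymm.apply x y, gmat_symm r x y, gmat_symm s x y]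
    · -- nonnegativity
      intro x y
      simp only [Matrix.add_apply, Matrix.smul_apply, Matrix.sub_apply, smul_eq_mul]
      by_cases h : (x, y) = s ∨ (x, y) = s.swap
      · have hgr : gmat r x y = 0 := hdisj x y h
        have hgs : gmat s x y = 1 := by
          unfold gmat; simp only [Matrix.of_apply]; rw [if_pos h]
        have hAxy : A x y = A s.1 s.2 := by
          rcases h with h | h
          · have h1 : x = s.1 := congrArg Prod.fst h
            have h2 : y = s.2 := congrArg Prod.snd h
            rw [h1, h2]
          · have h1 : x = s.2 := congrArg Prod.fst h
            have h2 : y = s.1 := congrArg Prod.snd h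
            rw [h1, h2, hsymm.apply]
        rw [hgr, hgs, hAxy]
        have h2 : ε * eW r ≤ ε * 2 :=
          mul_le_mul_of_nonneg_left (eW_le_two r) (le_of_lt hεpos)
        have : ε * (eW s * 0 - eW r * 1) = -(ε * eW r) := by ring
        rw [this]
        linarith
      · have hgs : gmat s x y = 0 := by
          unfold gmat; simp only [Matrix.of_apply]; rw [if_neg h]
        rw [hgs]
        have : ε * (eW s * gmat r x y - eW r * 0) = ε * eW s * gmat r x y := by ring
        rw [this]
        have := gmat_nonneg r x y
        have hes := (eW_pos s).le
        have := hnn x y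
        positivity
    · -- subset sum inequalities
      intro α
      have hsplit : ∑ i ∈ α, ∑ j ∈ α,
          (A + ε • (eW s • gmat r - eW r • gmat s)) i j
          = (∑ i ∈ α, ∑ j ∈ α, A i j)
            + ε * (eW s * (∑ i ∈ α, ∑ j ∈ α, gmat r i j)
                  - eW r * (∑ i ∈ α, ∑ j ∈ α, gmat s i j)) := by
        simp only [Matrix.add_apply, Matrix.smul_apply, Matrix.sub_apply, smul_eq_mul,
          Finset.sum_add_distrib, Finset.sum_sub_distrib, ← Finset.mul_sum]
        try ring
      rw [hsplit]
      by_cases hαu : α = Finset.univ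
      · subst hαu
        rw [hsat, gmat_sum, gmat_sum]
        have : eW s * eW r - eW r * eW s = 0 := by ring
        rw [this, mul_zero, add_zero, Finset.card_univ, Fintype.card_fin]
      · rcases Finset.eq_empty_or_nonempty α with hαe | hαe
        · subst hαe; simp
        · have hδα := hδle α hαe hαu
          have hbound : eW s * (∑ i ∈ α, ∑ j ∈ α, gmat r i j)
              - eW r * (∑ i ∈ α, ∑ j ∈ α, gmat s i j) ≤ 4 := by
            have h1 : eW s * (∑ i ∈ α, ∑ j ∈ α, gmat r i j) ≤ eW s * eW r :=
              mul_le_mul_of_nonneg_left (gmat_sum_le r α) (eW_pos s).le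
            have h2 : 0 ≤ eW r * (∑ i ∈ α, ∑ j ∈ α, gmat s i j) := by
              refine mul_nonneg (eW_pos r).le ?_
              exact Finset.sum_nonneg fun i _ =>
                Finset.sum_nonneg fun j _ => gmat_nonneg s i j
            have h3 : eW s * eW r ≤ 4 := by
              have := eW_le_two s
              have := eW_le_two r
              nlinarith [eW_pos s, eW_pos r]
            linarith
          have h4 : ε * (eW s * (∑ i ∈ α, ∑ j ∈ α, gmat r i j)
              - eW r * (∑ i ∈ α, ∑ j ∈ α, gmat s i j)) ≤ ε * 4 :=
            mul_le_mul_of_nonneg_left hbound hεpos.le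
          have h5 : ε * 4 ≤ δ := by linarith
          linarith
  -- apply the key lemma to both perturbations
  have hε2q : ε * 2 ≤ A q.1 q.2 := by linarith
  have hε2p : ε * 2 ≤ A p.1 p.2 := by linarith
  have h1 := key p q hAq hqp hqps hε2q
  have h2 := key q p hAp hpq hpqs hε2p
  have hadd : (A + ε • (eW q • gmat p - eW p • gmat q))
      + (A + ε • (eW p • gmat q - eW q • gmat p)) = (2 : ℝ) • A := by
    ext x y
    simp only [Matrix.add_apply, Matrix.smul_apply, Matrix.sub_apply, smul_eq_mul]
    ring
  obtain ⟨heq, -⟩ := hext _ _ h1 h2 hadd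
  have hval1 := congrFun (congrFun heq p.1) p.2
  have hgqp : gmat q p.1 p.2 = 0 := by
    refine gmat_eq_zero ?_ ?_
    · rw [Prod.mk.eta]; exact hpq
    · rw [Prod.mk.eta]; exact hpqs
  simp only [Matrix.add_apply, Matrix.smul_apply, Matrix.sub_apply, smul_eq_mul,
    gmat_self, hgqp] at hval1
  have heWq := eW_pos q
  nlinarith [hval1]
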